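/- Fix an integer r ≥ 2, a ∈ {0,1}, and ρ ∈ (0,1). Define f(t) = (1/t + t - 2ρ)/((r+a)/t + (r-a)t) for t = sqrt(R) > 0. Then f has a unique minimum on (0,∞) at t = (-a + sqrt(a^2 + ρ^2(r^2 - a^2)))/(ρ(r-a)), and the infimum of f over t ∈ (ρ, 1/ρ) is at least (r - sqrt(a^2 + ρ^2(r^2 - a^2)))/(r^2 - a^2). -/

import Mathlib

set_option maxHeartbeats 1000000 in
/-- For fixed `r ≥ 2`, `a ∈ {0,1}`, `ρ ∈ (0,1)`, the function
`f(t) = (1/t + t - 2ρ)/((r+a)/t + (r-a)t)` (with `t = √R`) has a unique minimum on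
`(0,∞)` at `t0 = (-a + sqrt(a² + ρ²(r² - a²)))/(ρ(r-a))`, and its infimum over
`t ∈ (ρ, 1/ρ)` is at least `(r - sqrt(a² + ρ²(r² - a²)))/(r² - a²)`. -/
theorem stmt15 (r : ℕ) (hr : 2 ≤ r) (a : ℝ) (ha : a = 0 ∨ a = 1)
    (ρ : ℝ) (hρ : ρ ∈ Set.Ioo (0:ℝ) 1) :
    (∀ t ∈ Set.Ioi (0:ℝ),
      t ≠ (-a + Real.sqrt (a ^ 2 + ρ ^ 2 * ((r : ℝ) ^ 2 - a ^ 2))) / (ρ * ((r : ℝ) - a)) →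
      (1 / ((-a + Real.sqrt (a ^ 2 + ρ ^ 2 * ((r : ℝ) ^ 2 - a ^ 2))) / (ρ * ((r : ℝ) - a)))
          + (-a + Real.sqrt (a ^ 2 + ρ ^ 2 * ((r : ℝ) ^ 2 - a ^ 2))) / (ρ * ((r : ℝ) - a))
          - 2 * ρ) /
        (((r : ℝ) + a) /
            ((-a + Real.sqrt (a ^ 2 + ρ ^ 2 * ((r : ℝ) ^ 2 - a ^ 2))) / (ρ * ((r : ℝ) - a)))
          + ((r : ℝ) - a) *
            ((-a + Real.sqrt (a ^ 2 + ρ ^ 2 * ((r : ℝ) ^ 2 - a ^ 2))) / (ρ * ((r : ℝ) - a)))) <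
      (1 / t + t - 2 * ρ) / (((r : ℝ) + a) / t + ((r : ℝ) - a) * t)) ∧
    (∀ t ∈ Set.Ioo ρ (1 / ρ),
      ((r : ℝ) - Real.sqrt (a ^ 2 + ρ ^ 2 * ((r : ℝ) ^ 2 - a ^ 2))) /
          ((r : ℝ) ^ 2 - a ^ 2) ≤
        (1 / t + t - 2 * ρ) / (((r : ℝ) + a) / t + ((r : ℝ) - a) * t)) := by
  obtain ⟨hρ0, hρ1⟩ := hρ
  have hr2 : (2:ℝ) ≤ (r:ℝ) := by exact_mod_cast hr
  have ha0 : 0 ≤ a := by rcases ha with h | h <;> simp [h]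
  have ha1 : a ≤ 1 := by rcases ha with h | h <;> simp [h]
  set s := Real.sqrt (a ^ 2 + ρ ^ 2 * ((r : ℝ) ^ 2 - a ^ 2)) with hsdef
  have hr2a : (0:ℝ) < (r:ℝ) ^ 2 - a ^ 2 := by nlinarith
  have hs2 : s ^ 2 = a ^ 2 + ρ ^ 2 * ((r : ℝ) ^ 2 - a ^ 2) :=
    Real.sq_sqrt (by nlinarith)
  have hsnn : 0 ≤ s := Real.sqrt_nonneg _
  have hsa : a < s := by nlinarith [mul_pos (pow_pos hρ0 2) hr2a]
  have hρ2 : ρ ^ 2 < 1 := by nlinarith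
  have hs2r : s ^ 2 < (r:ℝ) ^ 2 := by nlinarith
  have hsr : s < (r:ℝ) := by nlinarith
  have hra : (0:ℝ) < (r:ℝ) - a := by linarith
  have hrpa : (0:ℝ) < (r:ℝ) + a := by linarith
  have hsapos : (0:ℝ) < s + a := by linarith
  set t0 := (-a + s) / (ρ * ((r : ℝ) - a)) with ht0def
  have ht0pos : 0 < t0 := div_pos (by linarith) (mul_pos hρ0 hra)
  set m := ((r : ℝ) - s) / ((r : ℝ) ^ 2 - a ^ 2) with hmdef
  have hDpos : ∀ t : ℝ, 0 < t → 0 < ((r:ℝ) + a) / t + ((r:ℝ) - a) * t := fun t ht =>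
    add_pos (div_pos hrpa ht) (mul_pos hra ht)
  have hD'pos : ∀ t : ℝ, 0 < t → 0 < ((r:ℝ) + a) + ((r:ℝ) - a) * t ^ 2 := fun t ht =>
    add_pos hrpa (mul_pos hra (pow_pos ht 2))
  have hre : ∀ t : ℝ, 0 < t →
      (1 / t + t - 2 * ρ) / (((r:ℝ) + a) / t + ((r:ℝ) - a) * t) =
      (1 + t ^ 2 - 2 * ρ * t) / (((r:ℝ) + a) + ((r:ℝ) - a) * t ^ 2) := by
    intro t ht
    have ht' : t ≠ 0 := ne_of_gt ht
    have h1 := (hDpos t ht).ne'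
    have h2 := (hD'pos t ht).ne'
    field_simp
  have h0 : (s + a) * t0 = ρ * ((r:ℝ) + a) := by
    rw [ht0def]
    field_simp
    linear_combination hs2
  -- key algebraic identity
  have key2 : ∀ t : ℝ,
      ((1 + t ^ 2 - 2 * ρ * t) * ((r:ℝ) ^ 2 - a ^ 2)
        - ((r:ℝ) - s) * (((r:ℝ) + a) + ((r:ℝ) - a) * t ^ 2)) * (s + a)
      = ((r:ℝ) - a) * ((s + a) * t - ρ * ((r:ℝ) + a)) ^ 2 := by
    intro t
    linear_combination ((r:ℝ) + a) * hs2
  have hq : ∀ t : ℝ, 0 ≤ (1 + t ^ 2 - 2 * ρ * t) * ((r:ℝ) ^ 2 - a ^ 2)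
      - ((r:ℝ) - s) * (((r:ℝ) + a) + ((r:ℝ) - a) * t ^ 2) := by
    intro t
    nlinarith [key2 t, mul_nonneg hra.le (sq_nonneg ((s + a) * t - ρ * ((r:ℝ) + a))), hsapos]
  -- value at t0 equals m
  have hq0 : (1 + t0 ^ 2 - 2 * ρ * t0) * ((r:ℝ) ^ 2 - a ^ 2)
      - ((r:ℝ) - s) * (((r:ℝ) + a) + ((r:ℝ) - a) * t0 ^ 2) = 0 := by
    have h := key2 t0
    have hX : (s + a) * t0 - ρ * ((r:ℝ) + a) = 0 := by rw [h0]; ring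
    have h' : ((1 + t0 ^ 2 - 2 * ρ * t0) * ((r:ℝ) ^ 2 - a ^ 2)
        - ((r:ℝ) - s) * (((r:ℝ) + a) + ((r:ℝ) - a) * t0 ^ 2)) * (s + a) = 0 := by
      rw [h, hX]; ring
    rcases mul_eq_zero.mp h' with h'' | h''
    · exact h''
    · exact absurd h'' hsapos.ne'
  have hft0 : (1 / t0 + t0 - 2 * ρ) / (((r:ℝ) + a) / t0 + ((r:ℝ) - a) * t0) = m := by
    rw [hre t0 ht0pos, hmdef, div_eq_div_iff (hD'pos t0 ht0pos).ne' hr2a.ne']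
    linarith [hq0]
  constructor
  · intro t ht htne
    rw [Set.mem_Ioi] at ht
    rw [hft0, hre t ht, hmdef, div_lt_div_iff₀ hr2a (hD'pos t ht)]
    have hne : (s + a) * t - ρ * ((r:ℝ) + a) ≠ 0 := by
      intro h
      apply htne
      have h' : (s + a) * t = (s + a) * t0 := by rw [h0]; linarith
      exact mul_left_cancel₀ hsapos.ne' h'
    have hsq : 0 < ((s + a) * t - ρ * ((r:ℝ) + a)) ^ 2 := by positivity
    nlinarith [key2 t, mul_pos hra hsq, hsapos]
  · intro t ht
    have htpos : 0 < t := lt_trans hρ0 ht.1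
    rw [hre t htpos, div_le_div_iff₀ hr2a (hD'pos t htpos)]
    linarith [hq t]
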